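/- Let N ≥ 0 and let X and Y be disjoint subsets of {0, 1, …, N} with X ∪ Y = {0,…,N}. Then ∏_{\{u,v\}⊆X, u≠v} |u − v| = (∏_{\{u,v\}⊆Y, u≠v} |u − v|) · (∏_{i=1}^{N} i!) / (∏_{y∈Y} y! (N−y)!). -/

import Mathlib

open Finset

private def Fd (u v : ℕ) : ℝ := if u < v then (v : ℝ) - u else 1

private lemma Fd_pos (u v : ℕ) : 0 < Fd u v := by
  unfold Fd
  split
  · have : (u : ℝ) < v := by exact_mod_cast ‹u < v›
    linarith
  · norm_num

private lemma prod_Fd_pos (S T : Finset ℕ) : 0 < ∏ u ∈ S, ∏ v ∈ T, Fd u v :=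
  Finset.prod_pos fun u _ => Finset.prod_pos fun v _ => Fd_pos u v

private lemma prod_add_one (m : ℕ) :
    ∏ i ∈ range m, ((i : ℝ) + 1) = (Nat.factorial m : ℝ) := by
  rw [← Finset.prod_range_add_one_eq_factorial m]
  push_cast
  rfl

private lemma fact_left (N y : ℕ) (hy : y ≤ N) :
    ∏ x ∈ range (N + 1), Fd x y = (Nat.factorial y : ℝ) := by
  unfold Fd
  rw [← Finset.prod_filter]
  have hf : (range (N + 1)).filter (fun x => x < y) = range y := by
    ext a; simp only [mem_filter, mem_range]; omega
  rw [hf]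
  have h1 : ∏ x ∈ range y, ((y : ℝ) - x) = ∏ x ∈ range y, ((x : ℝ) + 1) := by
    rw [← Finset.prod_range_reflect]
    refine Finset.prod_congr rfl fun j hj => ?_
    have hj' : j < y := mem_range.mp hj
    have : (y - 1 - j : ℕ) = y - (j + 1) := by omega
    rw [this]
    have : ((y - (j + 1) : ℕ) : ℝ) = (y : ℝ) - (j + 1) := by
      have : j + 1 ≤ y := hj'
      push_cast [Nat.cast_sub this]
      ring
    rw [this]
    ring
  rw [h1, prod_add_one]

private lemma fact_right (N y : ℕ) (hy : y ≤ N) :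
    ∏ x ∈ range (N + 1), Fd y x = (Nat.factorial (N - y) : ℝ) := by
  unfold Fd
  rw [← Finset.prod_filter]
  have hf : (range (N + 1)).filter (fun x => y < x) = Finset.Ico (y + 1) (N + 1) := by
    ext a; simp only [mem_filter, mem_range, mem_Ico]; omega
  rw [hf, Finset.prod_Ico_eq_prod_range]
  have hc : N + 1 - (y + 1) = N - y := by omega
  rw [hc]
  have h1 : ∀ i ∈ range (N - y), ((y + 1 + i : ℕ) : ℝ) - (y : ℝ) = (i : ℝ) + 1 := by
    intro i _; push_cast; ring
  rw [Finset.prod_congr rfl h1, prod_add_one]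

private lemma full_prod (N : ℕ) :
    ∏ u ∈ range (N + 1), ∏ v ∈ range (N + 1), Fd u v
      = ∏ i ∈ range (N + 1), (Nat.factorial i : ℝ) := by
  rw [Finset.prod_comm]
  refine Finset.prod_congr rfl fun y hy => ?_
  exact fact_left N y (Nat.lt_succ_iff.mp (mem_range.mp hy))

/-- Let `N ≥ 0` and let `X` and `Y` be disjoint subsets of
`{0,1,…,N}` with `X ∪ Y = {0,…,N}`.  Then, with `Δ(Z) = ∏_{{u,v}⊆Z, u≠v} |u-v|`
the absolute Vandermonde product over unordered pairs,
`Δ(X) = Δ(Y) ⬝ (∏_{i=1}^N i!) / (∏_{y∈Y} y! (N-y)!)`. -/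
theorem stmt_6 (N : ℕ) (X Y : Finset ℕ) (hdisj : Disjoint X Y)
    (hunion : X ∪ Y = Finset.range (N + 1)) :
    (∏ u ∈ X, ∏ v ∈ X, if u < v then ((v : ℝ) - (u : ℝ)) else 1)
    = (∏ u ∈ Y, ∏ v ∈ Y, if u < v then ((v : ℝ) - (u : ℝ)) else 1) *
        (∏ i ∈ Finset.range (N + 1), (Nat.factorial i : ℝ)) /
        (∏ y ∈ Y, ((Nat.factorial y * Nat.factorial (N - y) : ℕ) : ℝ)) := by
  have hFd : ∀ S T : Finset ℕ,
      (∏ u ∈ S, ∏ v ∈ T, if u < v then ((v : ℝ) - (u : ℝ)) else 1)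
        = ∏ u ∈ S, ∏ v ∈ T, Fd u v := fun _ _ => rfl
  rw [hFd, hFd]
  set a := ∏ u ∈ X, ∏ v ∈ X, Fd u v with ha
  set b := ∏ u ∈ X, ∏ v ∈ Y, Fd u v with hb
  set c := ∏ u ∈ Y, ∏ v ∈ X, Fd u v with hc
  set d := ∏ u ∈ Y, ∏ v ∈ Y, Fd u v with hd
  have hYsub : ∀ y ∈ Y, y ≤ N := by
    intro y hy
    have : y ∈ range (N + 1) := hunion ▸ mem_union_right X hy
    exact Nat.lt_succ_iff.mp (mem_range.mp this)
  -- full product decomposition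
  have hfull : ∏ i ∈ range (N + 1), (Nat.factorial i : ℝ) = a * b * (c * d) := by
    rw [← full_prod N, ← hunion, Finset.prod_union hdisj]
    simp only [Finset.prod_union hdisj, Finset.prod_mul_distrib]
    rfl
  -- denominator decomposition
  have hden : (∏ y ∈ Y, ((Nat.factorial y * Nat.factorial (N - y) : ℕ) : ℝ))
      = b * d * (c * d) := by
    have step : ∀ y ∈ Y, ((Nat.factorial y * Nat.factorial (N - y) : ℕ) : ℝ)
        = (∏ x ∈ range (N + 1), Fd x y) * (∏ x ∈ range (N + 1), Fd y x) := by
      intro y hy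
      rw [fact_left N y (hYsub y hy), fact_right N y (hYsub y hy)]
      push_cast; ring
    rw [Finset.prod_congr rfl step, Finset.prod_mul_distrib]
    have h1 : (∏ y ∈ Y, ∏ x ∈ range (N + 1), Fd x y) = b * d := by
      rw [← hunion]
      simp only [Finset.prod_union hdisj, Finset.prod_mul_distrib]
      rw [hb, hd, Finset.prod_comm (s := Y) (t := X), Finset.prod_comm (s := Y) (t := Y)]
    have h2 : (∏ y ∈ Y, ∏ x ∈ range (N + 1), Fd y x) = c * d := by
      rw [← hunion]
      simp only [Finset.prod_union hdisj, Finset.prod_mul_distrib]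
      rfl
    rw [h1, h2]
  rw [hfull, hden]
  have hbpos := prod_Fd_pos X Y
  have hcpos := prod_Fd_pos Y X
  have hdpos := prod_Fd_pos Y Y
  rw [← hb] at hbpos; rw [← hc] at hcpos; rw [← hd] at hdpos
  field_simp
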